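/- arXiv:1101.4339 — 9 statements merged into one kernel-verified Lean document; each statement's English description precedes it below -/
import Mathlib

section
/- Let k be an integer and define integer sequences P_n, Q_n by P_1 = 2k, Q_1 = 1, and P_{n+1} = k(P_n² + Q_n²), Q_{n+1} = P_n·Q_n for n ≥ 1. If a prime p divides both P_n and P_m for some m ≠ n, then p divides k. -/
theorem stmt4 (k : ℤ) (P Q : ℕ → ℤ)
    (hP1 : P 1 = 2 * k) (hQ1 : Q 1 = 1)
    (hP : ∀ n : ℕ, 1 ≤ n → P (n + 1) = k * (P n ^ 2 + Q n ^ 2))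
    (hQ : ∀ n : ℕ, 1 ≤ n → Q (n + 1) = P n * Q n)
    (p : ℕ) (hp : p.Prime) (m n : ℕ) (hm : 1 ≤ m) (hn : 1 ≤ n) (hmn : m ≠ n)
    (hdvdn : (p : ℤ) ∣ P n) (hdvdm : (p : ℤ) ∣ P m) :
    (p : ℤ) ∣ k := by
  by_contra hk
  have hp' : Prime (p : ℤ) := Nat.prime_iff_prime_int.mp hp
  -- p never divides both P j and Q j
  have cop : ∀ j : ℕ, 1 ≤ j → ¬ ((p : ℤ) ∣ P j ∧ (p : ℤ) ∣ Q j) := by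
    intro j hj
    induction j with
    | zero => omega
    | succ j ih =>
      rcases Nat.lt_or_ge 1 (j + 1) with h1 | h1
      · have hj1 : 1 ≤ j := by omega
        rintro ⟨hPd, hQd⟩
        rw [hP j hj1] at hPd
        rw [hQ j hj1] at hQd
        have hsum : (p : ℤ) ∣ P j ^ 2 + Q j ^ 2 :=
          (hp'.dvd_mul.mp hPd).resolve_left hk
        rcases hp'.dvd_mul.mp hQd with hPj | hQj
        · have : (p : ℤ) ∣ Q j ^ 2 := by
            have h2 : (p : ℤ) ∣ P j ^ 2 := dvd_pow hPj (by norm_num)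
            have := dvd_sub hsum h2
            simpa using this
          exact ih hj1 ⟨hPj, hp'.dvd_of_dvd_pow this⟩
        · have : (p : ℤ) ∣ P j ^ 2 := by
            have h2 : (p : ℤ) ∣ Q j ^ 2 := dvd_pow hQj (by norm_num)
            have := dvd_sub hsum h2
            simpa using this
          exact ih hj1 ⟨hp'.dvd_of_dvd_pow this, hQj⟩
      · have : j = 0 := by omega
        subst this
        rintro ⟨_, hQd⟩
        rw [hQ1] at hQd
        exact hp.one_lt.ne' (by exact_mod_cast Int.eq_one_of_dvd_one (by norm_num) hQd)
  -- key: can't have p ∣ P a and p ∣ P b with a < b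
  have key : ∀ a b : ℕ, 1 ≤ a → a < b → (p : ℤ) ∣ P a → (p : ℤ) ∣ P b → False := by
    intro a b ha hab hPa hPb
    have hQall : ∀ j : ℕ, a + 1 ≤ j → (p : ℤ) ∣ Q j := by
      intro j hj
      induction j with
      | zero => omega
      | succ j ih =>
        rcases Nat.lt_or_ge (a + 1) (j + 1) with h1 | h1
        · have hj1 : 1 ≤ j := by omega
          rw [hQ j hj1]
          exact Dvd.dvd.mul_left (ih (by omega)) _
        · rw [show j = a from by omega, hQ a ha]
          exact Dvd.dvd.mul_right hPa _
    exact cop b (by omega) ⟨hPb, hQall b (by omega)⟩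
  rcases lt_or_gt_of_ne hmn with h | h
  · exact key m n hm h hdvdm hdvdn
  · exact key n m hn h hdvdn hdvdm
end

section
/- Let k be an integer not divisible by 3, and define P_1 = 2k, Q_1 = 1, P_{n+1} = k(P_n² + Q_n²), Q_{n+1} = P_n·Q_n. Set δ_n = k·P_n. Then for all n ≥ 1, δ_n ≡ 2 (mod 3); in particular δ_n is not a perfect square for any n. -/
theorem stmt6 (k : ℤ) (hk : ¬ (3 : ℤ) ∣ k) (P Q : ℕ → ℤ)
    (hP1 : P 1 = 2 * k) (hQ1 : Q 1 = 1)
    (hP : ∀ n : ℕ, 1 ≤ n → P (n + 1) = k * (P n ^ 2 + Q n ^ 2))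
    (hQ : ∀ n : ℕ, 1 ≤ n → Q (n + 1) = P n * Q n)
    (δ : ℕ → ℤ) (hδ : ∀ n, δ n = k * P n) :
    ∀ n : ℕ, 1 ≤ n → δ n ≡ 2 [ZMOD 3] ∧ ¬ IsSquare (δ n) := by
  have hk0 : (k : ZMod 3) ≠ 0 := by
    rwa [Ne, ZMod.intCast_zmod_eq_zero_iff_dvd]
  have hsq : ∀ a : ZMod 3, a ≠ 0 → a ^ 2 = 1 := by decide
  have key : ∀ n : ℕ, 1 ≤ n →
      (P n : ZMod 3) ≠ 0 ∧ (Q n : ZMod 3) ≠ 0 ∧ ((k * P n : ℤ) : ZMod 3) = 2 := by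
    intro n hn
    induction n with
    | zero => omega
    | succ m ih =>
      rcases Nat.eq_or_lt_of_le hn with h | h
      · have hm : m = 0 := by omega
        subst hm
        refine ⟨?_, ?_, ?_⟩
        · rw [hP1]; push_cast
          intro h; apply hk0
          have : (2 : ZMod 3) * k = 0 := h
          have h2 : (2 : ZMod 3) ≠ 0 := by decide
          exact (mul_eq_zero.mp this).resolve_left h2
        · rw [hQ1]; push_cast; decide
        · rw [hP1]; push_cast
          have := hsq _ hk0
          ring_nf
          ring_nf at this
          rw [this]; ring
      · have hm : 1 ≤ m := by omega
        obtain ⟨hPm, hQm, _⟩ := ih hm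
        have e1 : ((P (m+1) : ℤ) : ZMod 3) = (k : ZMod 3) * ((P m)^2 + (Q m)^2) := by
          rw [hP m hm]; push_cast; ring
        have e2 : ((P m : ZMod 3))^2 + ((Q m : ZMod 3))^2 = 2 := by
          rw [hsq _ hPm, hsq _ hQm]; decide
        refine ⟨?_, ?_, ?_⟩
        · rw [e1, e2]
          intro h
          apply hk0
          have h2 : (2 : ZMod 3) ≠ 0 := by decide
          exact (mul_eq_zero.mp h).resolve_right h2
        · rw [hQ m hm]; push_cast
          exact mul_ne_zero hPm hQm
        · push_cast
          rw [show ((P (m+1) : ℤ) : ZMod 3) = (k : ZMod 3) * ((P m)^2 + (Q m)^2) from e1, e2]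
          rw [show (k : ZMod 3) * ((k : ZMod 3) * 2) = k^2 * 2 by ring, hsq _ hk0]
          ring
  intro n hn
  obtain ⟨_, _, h2⟩ := key n hn
  have hmod : δ n ≡ 2 [ZMOD 3] := by
    rw [hδ]
    have : ((k * P n : ℤ) : ZMod 3) = ((2 : ℤ) : ZMod 3) := by push_cast; rw [← h2]; push_cast; ring
    exact ((ZMod.intCast_eq_intCast_iff _ _ _)).mp this
  refine ⟨hmod, ?_⟩
  rintro ⟨r, hr⟩
  have : ((δ n : ℤ) : ZMod 3) = (r : ZMod 3) * (r : ZMod 3) := by rw [hr]; push_cast; ring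
  have h2' : ((δ n : ℤ) : ZMod 3) = 2 := by
    have := ((ZMod.intCast_eq_intCast_iff _ _ _)).mpr hmod
    simpa using this
  rw [h2'] at this
  have : ∀ a : ZMod 3, a * a ≠ 2 := by decide
  exact this _ (by rw [‹(2 : ZMod 3) = _›])
end

section
/- Let k be an integer with k ≡ 2 (mod 5) or k ≡ 3 (mod 5), and define P_1 = 2k, Q_1 = 1, P_{n+1} = k(P_n² + Q_n²), Q_{n+1} = P_n·Q_n, and δ_n = k·P_n. Then δ_n ≡ 3 (mod 5) for all n ≥ 1; in particular neither δ_n nor −δ_n is a perfect square in ℤ for any n. -/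
theorem stmt7 (k : ℤ) (hk : k ≡ 2 [ZMOD 5] ∨ k ≡ 3 [ZMOD 5]) (P Q : ℕ → ℤ)
    (hP1 : P 1 = 2 * k) (hQ1 : Q 1 = 1)
    (hP : ∀ n : ℕ, 1 ≤ n → P (n + 1) = k * (P n ^ 2 + Q n ^ 2))
    (hQ : ∀ n : ℕ, 1 ≤ n → Q (n + 1) = P n * Q n)
    (δ : ℕ → ℤ) (hδ : ∀ n, δ n = k * P n) :
    ∀ n : ℕ, 1 ≤ n → δ n ≡ 3 [ZMOD 5] ∧ ¬ IsSquare (δ n) ∧ ¬ IsSquare (-δ n) := by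
  have hk' : ((k : ZMod 5) = 2 ∨ (k : ZMod 5) = 3) := by
    rcases hk with h | h
    · left; simpa using ((ZMod.intCast_eq_intCast_iff _ _ _).mpr h)
    · right; simpa using ((ZMod.intCast_eq_intCast_iff _ _ _).mpr h)
  have key : ∀ n : ℕ, 1 ≤ n →
      ((P n : ZMod 5) = 2 * (k : ZMod 5) ∧ ((Q n : ZMod 5))^2 = 1) := by
    intro n hn
    induction n with
    | zero => omega
    | succ m ih =>
      rcases Nat.eq_or_lt_of_le hn with h | h
      · have hm : m = 0 := by omega
        subst hm
        constructor
        · rw [hP1]; push_cast; ring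
        · rw [hQ1]; norm_num
      · have hm : 1 ≤ m := by omega
        obtain ⟨h1, h2⟩ := ih hm
        have hk2 : (k : ZMod 5)^2 = 4 := by rcases hk' with h | h <;> rw [h] <;> decide
        constructor
        · rw [hP m hm]; push_cast; rw [h1, h2]
          rcases hk' with h | h <;> rw [h] <;> decide
        · rw [hQ m hm]; push_cast; rw [mul_pow, h1, h2]
          rcases hk' with h | h <;> rw [h] <;> decide
  intro n hn
  obtain ⟨h1, _⟩ := key n hn
  have hδ5 : ((δ n : ZMod 5)) = 3 := by
    rw [hδ n]; push_cast; rw [h1]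
    have : (k : ZMod 5)^2 = 4 := by rcases hk' with h | h <;> rw [h] <;> decide
    rw [show (k:ZMod 5) * (2 * (k:ZMod 5)) = 2 * (k:ZMod 5)^2 by ring, this]
    decide
  refine ⟨?_, ?_, ?_⟩
  · exact (ZMod.intCast_eq_intCast_iff _ _ _).mp (by rw [hδ5]; decide)
  · rintro ⟨r, hr⟩
    have : ((δ n : ZMod 5)) = (r : ZMod 5) * (r : ZMod 5) := by rw [hr]; push_cast; ring
    rw [hδ5] at this
    have : IsSquare (3 : ZMod 5) := ⟨(r : ZMod 5), this⟩
    revert this; decide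
  · rintro ⟨r, hr⟩
    have : ((-δ n : ℤ) : ZMod 5) = (r : ZMod 5) * (r : ZMod 5) := by rw [hr]; push_cast; ring
    rw [Int.cast_neg, hδ5] at this
    have : IsSquare (-3 : ZMod 5) := ⟨(r : ZMod 5), this.symm.symm⟩
    revert this; decide
end

section
/- Let k be an integer and p an odd prime dividing 4k² − 1. Define P_1 = 2k, Q_1 = 1, P_{n+1} = k(P_n² + Q_n²), Q_{n+1} = P_n·Q_n, and δ_n = k·P_n. Then δ_n ≡ 2k² (mod p) for all n ≥ 1. -/
theorem stmt8 (k : ℤ) (p : ℕ) (hp : p.Prime) (hodd : Odd p)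
    (hdvd : (p : ℤ) ∣ (4 * k ^ 2 - 1)) (P Q : ℕ → ℤ)
    (hP1 : P 1 = 2 * k) (hQ1 : Q 1 = 1)
    (hP : ∀ n : ℕ, 1 ≤ n → P (n + 1) = k * (P n ^ 2 + Q n ^ 2))
    (hQ : ∀ n : ℕ, 1 ≤ n → Q (n + 1) = P n * Q n)
    (δ : ℕ → ℤ) (hδ : ∀ n, δ n = k * P n) :
    ∀ n : ℕ, 1 ≤ n → δ n ≡ 2 * k ^ 2 [ZMOD (p : ℤ)] := by
  have h4 : (4 * k ^ 2 : ℤ) ≡ 1 [ZMOD (p : ℤ)] :=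
    (Int.modEq_iff_dvd.mpr (by simpa using hdvd)).symm
  have key : ∀ n : ℕ, 1 ≤ n →
      (P n ≡ 2 * k [ZMOD (p : ℤ)]) ∧ (Q n ^ 2 ≡ 1 [ZMOD (p : ℤ)]) := by
    intro n hn
    induction n with
    | zero => omega
    | succ m ih =>
      rcases Nat.eq_or_lt_of_le hn with h1 | h1
      · rw [← h1, hP1, hQ1]; exact ⟨Int.ModEq.refl _, by norm_num⟩
      · have hm : 1 ≤ m := by omega
        obtain ⟨hPm, hQm⟩ := ih hm
        have hP2 : P m ^ 2 ≡ 4 * k ^ 2 [ZMOD (p : ℤ)] := by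
          calc P m ^ 2 ≡ (2 * k) ^ 2 [ZMOD (p : ℤ)] := hPm.pow 2
          _ = 4 * k ^ 2 := by ring
        constructor
        · rw [hP m hm]
          calc k * (P m ^ 2 + Q m ^ 2)
              ≡ k * (1 + 1) [ZMOD (p : ℤ)] :=
                (Int.ModEq.refl k).mul ((hP2.trans h4).add hQm)
            _ = 2 * k := by ring
        · rw [hQ m hm]
          calc (P m * Q m) ^ 2 = P m ^ 2 * Q m ^ 2 := by ring
            _ ≡ 4 * k ^ 2 * 1 [ZMOD (p : ℤ)] := hP2.mul hQm
            _ ≡ 1 * 1 [ZMOD (p : ℤ)] := h4.mul (Int.ModEq.refl 1)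
            _ = 1 := by ring
  intro n hn
  rw [hδ]
  calc k * P n ≡ k * (2 * k) [ZMOD (p : ℤ)] := (Int.ModEq.refl k).mul (key n hn).1
    _ = 2 * k ^ 2 := by ring
end

section
/- Let k be an integer and p an odd prime dividing 2k² − k + 1 with p not dividing k. Define P_1 = 2k, Q_1 = 1, P_{n+1} = k(P_n² + Q_n²), Q_{n+1} = P_n·Q_n, and δ_n = k·P_n. Then δ_n ≡ δ_2 (mod p) for all n ≥ 2, and moreover δ_2 = k²(4k² + 1) is a square modulo p if and only if −k is a square modulo p. -/
theorem stmt9 (k : ℤ) (p : ℕ) (hp : p.Prime) (hodd : Odd p)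
    (hdvd : (p : ℤ) ∣ (2 * k ^ 2 - k + 1)) (hk : ¬ (p : ℤ) ∣ k) (P Q : ℕ → ℤ)
    (hP1 : P 1 = 2 * k) (hQ1 : Q 1 = 1)
    (hP : ∀ n : ℕ, 1 ≤ n → P (n + 1) = k * (P n ^ 2 + Q n ^ 2))
    (hQ : ∀ n : ℕ, 1 ≤ n → Q (n + 1) = P n * Q n)
    (δ : ℕ → ℤ) (hδ : ∀ n, δ n = k * P n) :
    (∀ n : ℕ, 2 ≤ n → δ n ≡ δ 2 [ZMOD (p : ℤ)]) ∧
      δ 2 = k ^ 2 * (4 * k ^ 2 + 1) ∧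
      (IsSquare ((k ^ 2 * (4 * k ^ 2 + 1) : ℤ) : ZMod p) ↔ IsSquare ((-k : ℤ) : ZMod p)) := by
  have key : ∀ n : ℕ, 2 ≤ n → (p:ℤ) ∣ (P n + 1) ∧ (p:ℤ) ∣ (Q n ^ 2 - 4 * k ^ 2) := by
    intro n hn
    induction n with
    | zero => omega
    | succ m ih =>
      rcases Nat.lt_or_ge m 2 with hm | hm
      · interval_cases m
        · omega
        · constructor
          · have h : P 2 + 1 = (2*k+1) * (2*k^2 - k + 1) := by
              rw [hP 1 le_rfl, hP1, hQ1]; ring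
            rw [h]; exact Dvd.dvd.mul_left hdvd _
          · have h : Q 2 ^ 2 - 4*k^2 = 0 := by
              rw [hQ 1 le_rfl, hP1, hQ1]; ring
            rw [h]; exact dvd_zero _
      · obtain ⟨h1, h2⟩ := ih hm
        constructor
        · have h : P (m+1) + 1 =
              k*(P m - 1)*(P m + 1) + k*(Q m^2 - 4*k^2) + (2*k+1)*(2*k^2-k+1) := by
            rw [hP m (by omega)]; ring
          rw [h]
          exact dvd_add (dvd_add (h1.mul_left _) (h2.mul_left _)) (hdvd.mul_left _)
        · have h : Q (m+1)^2 - 4*k^2 = Q m^2*(P m - 1)*(P m + 1) + (Q m^2 - 4*k^2) := by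
            rw [hQ m (by omega)]; ring
          rw [h]; exact dvd_add (h1.mul_left _) h2
  have hδ2 : δ 2 = k^2*(4*k^2+1) := by
    rw [hδ, hP 1 le_rfl, hP1, hQ1]; ring
  refine ⟨?_, hδ2, ?_⟩
  · intro n hn
    have h1 := (key n hn).1
    have h2 := (key 2 le_rfl).1
    rw [Int.modEq_iff_dvd]
    have h : δ 2 - δ n = k * (P 2 + 1) - k * (P n + 1) := by
      rw [hδ, hδ]; ring
    rw [h]
    exact dvd_sub (h2.mul_left _) (h1.mul_left _)
  · have h : ((k ^ 2 * (4 * k ^ 2 + 1) : ℤ) : ZMod p) = ((-k : ℤ) : ZMod p) := by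
      rw [ZMod.intCast_eq_intCast_iff']
      refine Int.modEq_iff_dvd.mpr ?_
      have h : (-k : ℤ) - k ^ 2 * (4 * k ^ 2 + 1) = -(k*(2*k+1)*(2*k^2-k+1)) := by ring
      rw [h]
      exact (hdvd.mul_left _).neg_right
    rw [h]
end

section
/- Define integer sequences a_n, b_n by a_1 = 2, b_1 = 1, a_{n+1} = a_n² + b_n², b_{n+1} = a_n·b_n, and sequences σ_n, τ_n by σ_1 = 2, τ_1 = 1, σ_{2j} = τ_{2j−1}², σ_{2j+1} = σ_{2j}² + τ_{2j}², and τ_{j+1} = σ_j·τ_j. Then for all j ≥ 1, σ_{2j+1}·b_{j+1} = τ_{2j+1}·a_{j+1}. -/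
theorem stmt11 (a b σ τ : ℕ → ℤ)
    (ha1 : a 1 = 2) (hb1 : b 1 = 1)
    (ha : ∀ n : ℕ, 1 ≤ n → a (n + 1) = a n ^ 2 + b n ^ 2)
    (hb : ∀ n : ℕ, 1 ≤ n → b (n + 1) = a n * b n)
    (hσ1 : σ 1 = 2) (hτ1 : τ 1 = 1)
    (hσeven : ∀ j : ℕ, 1 ≤ j → σ (2 * j) = τ (2 * j - 1) ^ 2)
    (hσodd : ∀ j : ℕ, 1 ≤ j → σ (2 * j + 1) = σ (2 * j) ^ 2 + τ (2 * j) ^ 2)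
    (hτ : ∀ j : ℕ, 1 ≤ j → τ (j + 1) = σ j * τ j) :
    ∀ j : ℕ, 1 ≤ j → σ (2 * j + 1) * b (j + 1) = τ (2 * j + 1) * a (j + 1) := by
  intro j hj
  induction j with
  | zero => omega
  | succ n ih =>
    rcases Nat.lt_or_ge n 1 with h | h
    · -- base case: n = 0
      have hn : n = 0 := by omega
      subst hn
      have e2 : σ 2 = 1 := by
        have := hσeven 1 le_rfl; norm_num at this; rw [this, hτ1]; ring
      have t2 : τ 2 = 2 := by
        have := hτ 1 le_rfl; rw [this, hσ1, hτ1]; ring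
      have e3 : σ 3 = 5 := by
        have := hσodd 1 le_rfl; norm_num at this; rw [this, e2, t2]; ring
      have t3 : τ 3 = 2 := by
        have := hτ 2 one_le_two; rw [this, e2, t2]; ring
      have a2 : a 2 = 5 := by rw [ha 1 le_rfl, ha1, hb1]; ring
      have b2 : b 2 = 2 := by rw [hb 1 le_rfl, ha1, hb1]; ring
      norm_num [e3, t3, a2, b2]
    · -- inductive step, n ≥ 1
      have ih' := ih h
      have hσe : σ (2 * n + 2) = τ (2 * n + 1) ^ 2 := by
        have := hσeven (n + 1) (by omega)
        have h2 : 2 * (n + 1) - 1 = 2 * n + 1 := by omega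
        have h1 : 2 * (n + 1) = 2 * n + 2 := by ring
        rw [h2, h1] at this; exact this
      have hτe : τ (2 * n + 2) = σ (2 * n + 1) * τ (2 * n + 1) :=
        hτ (2 * n + 1) (by omega)
      have hσo : σ (2 * n + 3) = σ (2 * n + 2) ^ 2 + τ (2 * n + 2) ^ 2 := by
        have := hσodd (n + 1) (by omega)
        have h1 : 2 * (n + 1) = 2 * n + 2 := by ring
        rw [h1] at this; exact this
      have hτo : τ (2 * n + 3) = σ (2 * n + 2) * τ (2 * n + 2) :=
        hτ (2 * n + 2) (by omega)
      have han : a (n + 2) = a (n + 1) ^ 2 + b (n + 1) ^ 2 := ha (n + 1) (by omega)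
      have hbn : b (n + 2) = a (n + 1) * b (n + 1) := hb (n + 1) (by omega)
      have hgoal : 2 * (n + 1) + 1 = 2 * n + 3 := by ring
      rw [hgoal, show n + 1 + 1 = n + 2 from rfl, hσo, hτo, hσe, hτe, han, hbn]
      linear_combination (σ (2 * n + 1) * τ (2 * n + 1) ^ 2 * a (n + 1) -
        τ (2 * n + 1) ^ 3 * b (n + 1)) * ih'
end

section
/- Define integer sequences a_n, b_n by a_1 = 2, b_1 = 1, a_{n+1} = a_n² + b_n², b_{n+1} = a_n·b_n. Then for all n ≥ 1, gcd(a_n, b_n) = 1; moreover for all n ≥ 2, a_n is odd and every prime divisor of a_n is congruent to 1 modulo 4. -/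
lemma aux12 (p : ℕ) (hp : p.Prime) (hne2 : p ≠ 2) (x y : ℤ)
    (hcop : IsCoprime x y) (hdvd : (p : ℤ) ∣ x ^ 2 + y ^ 2) : p % 4 = 1 := by
  haveI := Fact.mk hp
  have hpZ : Prime (p : ℤ) := Nat.prime_iff_prime_int.mp hp
  have hx : (x : ZMod p) ≠ 0 := by
    intro h
    rw [ZMod.intCast_zmod_eq_zero_iff_dvd] at h
    have hy2 : (p : ℤ) ∣ y ^ 2 := by
      have hx2 : (p : ℤ) ∣ x ^ 2 := dvd_pow h two_ne_zero
      have := dvd_sub hdvd hx2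
      simpa using this
    have hy : (p : ℤ) ∣ y := hpZ.dvd_of_dvd_pow hy2
    obtain ⟨u, v, huv⟩ := hcop
    have hone : (p : ℤ) ∣ 1 := by
      rw [← huv]; exact dvd_add (h.mul_left u) (hy.mul_left v)
    have := Int.eq_one_of_dvd_one (by positivity) hone
    have hp1 : p = 1 := by exact_mod_cast this
    exact hp.one_lt.ne' hp1
  have hsum : (x : ZMod p) ^ 2 + (y : ZMod p) ^ 2 = 0 := by
    have := (ZMod.intCast_zmod_eq_zero_iff_dvd _ p).2 hdvd
    push_cast at this
    exact this
  have hsq : ((y : ZMod p) * (x : ZMod p)⁻¹) ^ 2 = -1 := by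
    field_simp
    linear_combination hsum
  have hIs : IsSquare (-1 : ZMod p) := ⟨(y : ZMod p) * (x : ZMod p)⁻¹, by rw [← hsq]; ring⟩
  have h3 := (ZMod.exists_sq_eq_neg_one_iff (p := p)).1 hIs
  have hodd : p % 2 = 1 := Nat.odd_iff.1 (hp.odd_of_ne_two hne2)
  omega

theorem stmt12 (a b : ℕ → ℤ)
    (ha1 : a 1 = 2) (hb1 : b 1 = 1)
    (ha : ∀ n : ℕ, 1 ≤ n → a (n + 1) = a n ^ 2 + b n ^ 2)
    (hb : ∀ n : ℕ, 1 ≤ n → b (n + 1) = a n * b n) :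
    (∀ n : ℕ, 1 ≤ n → Int.gcd (a n) (b n) = 1) ∧
      (∀ n : ℕ, 2 ≤ n → Odd (a n) ∧
        ∀ p : ℕ, p.Prime → (p : ℤ) ∣ a n → p % 4 = 1) := by
  have key : ∀ n : ℕ, 1 ≤ n → IsCoprime (a n) (b n) := by
    intro n hn
    induction n, hn using Nat.le_induction with
    | base => rw [ha1, hb1]; exact isCoprime_one_right
    | succ n hn ih =>
      rw [ha n hn, hb n hn]
      have h1 : IsCoprime (a n ^ 2 + b n ^ 2) (a n) := by
        have h := (IsCoprime.pow_left (m := 2) ih.symm).add_mul_right_left (a n)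
        have : b n ^ 2 + a n * a n = a n ^ 2 + b n ^ 2 := by ring
        rwa [this] at h
      have h2 : IsCoprime (a n ^ 2 + b n ^ 2) (b n) := by
        have h := (IsCoprime.pow_left (m := 2) ih).add_mul_right_left (b n)
        have : a n ^ 2 + b n * b n = a n ^ 2 + b n ^ 2 := by ring
        rwa [this] at h
      exact h1.mul_right h2
  have par : ∀ n : ℕ, 2 ≤ n → Odd (a n) ∧ Even (b n) := by
    intro n hn
    induction n, hn using Nat.le_induction with
    | base =>
      constructor
      · rw [ha 1 le_rfl, ha1, hb1]; decide
      · rw [hb 1 le_rfl, ha1, hb1]; decide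
    | succ n hn ih =>
      obtain ⟨hoa, heb⟩ := ih
      have hn1 : 1 ≤ n := le_trans (by norm_num) hn
      constructor
      · rw [ha n hn1]
        rcases hoa with ⟨k, hk⟩
        rcases heb with ⟨m, hm⟩
        exact ⟨2 * k ^ 2 + 2 * k + 2 * m ^ 2, by rw [hk, hm]; ring⟩
      · rw [hb n hn1]
        exact heb.mul_left _
  refine ⟨fun n hn => Int.isCoprime_iff_gcd_eq_one.1 (key n hn), fun n hn => ?_⟩
  refine ⟨(par n hn).1, fun p hp hpd => ?_⟩
  have hne2 : p ≠ 2 := by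
    rintro rfl
    rcases (par n hn).1 with ⟨k, hk⟩
    rcases (show (2 : ℤ) ∣ a n from by exact_mod_cast hpd) with ⟨m, hm⟩
    omega
  obtain ⟨m, rfl⟩ : ∃ m, n = m + 1 := ⟨n - 1, by omega⟩
  have hm1 : 1 ≤ m := by omega
  rw [ha m hm1] at hpd
  exact aux12 p hp hne2 _ _ (key m hm1) hpd
end

section
/- Let k, b ∈ ℚ be nonzero and suppose that none of −b, 4k² + 1, and −b(4k² + 1) is a square in ℚ. Then the quartic polynomial k²(x² + b)² + b x² is irreducible over ℚ. -/
open Polynomial in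
theorem stmt15 (k b : ℚ) (hk : k ≠ 0) (hb : b ≠ 0)
    (h1 : ¬ IsSquare (-b)) (h2 : ¬ IsSquare (4 * k ^ 2 + 1))
    (h3 : ¬ IsSquare (-b * (4 * k ^ 2 + 1))) :
    Irreducible (C (k ^ 2) * (X ^ 2 + C b) ^ 2 + C b * X ^ 2 : ℚ[X]) := by
  have hk2 : k ^ 2 ≠ 0 := pow_ne_zero 2 hk
  set g : ℚ[X] := C (k ^ 2) * (X ^ 2 + C b) ^ 2 + C b * X ^ 2 with hgdef
  have hgexp : g = C (k^2) * X^4 + C (2*k^2*b + b) * X^2 + C (k^2*b^2) := by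
    rw [hgdef]; simp only [C_mul, C_add, C_pow, map_ofNat]; ring
  have hg4 : g.natDegree = 4 := by rw [hgexp]; compute_degree!
  have hgne : g ≠ 0 := fun h => by simp [h] at hg4
  have noroot : ∀ r : ℚ, ¬ g.IsRoot r := by
    intro r hr
    apply h2
    have heval : k^2*(r^2+b)^2 + b*r^2 = 0 := by
      have h' := hr
      rw [hgdef] at h'
      simp only [IsRoot, eval_add, eval_mul, eval_pow, eval_C, eval_X] at h'
      linear_combination h'
    refine ⟨(2*k^2*r^2 + 2*k^2*b + b)/b, ?_⟩
    field_simp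
    linear_combination (-4*k^2) * heval
  rw [irreducible_iff]
  refine ⟨fun hu => by simp [Polynomial.natDegree_eq_zero_of_isUnit hu] at hg4, ?_⟩
  intro A B hAB
  by_contra hc
  push_neg at hc
  obtain ⟨hA, hB⟩ := hc
  have hA0 : A ≠ 0 := fun h => hgne (by rw [hAB, h, zero_mul])
  have hB0 : B ≠ 0 := fun h => hgne (by rw [hAB, h, mul_zero])
  have hunit : ∀ P : ℚ[X], P ≠ 0 → P.natDegree = 0 → IsUnit P := by
    intro P hP h0
    rw [Polynomial.eq_C_of_natDegree_eq_zero h0]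
    refine Polynomial.isUnit_C.mpr (isUnit_iff_ne_zero.mpr fun hc0 => hP ?_)
    rw [Polynomial.eq_C_of_natDegree_eq_zero h0, hc0, map_zero]
  have hsum : A.natDegree + B.natDegree = 4 := by
    rw [← Polynomial.natDegree_mul hA0 hB0, ← hAB, hg4]
  have hA1 : 1 ≤ A.natDegree := by
    rcases Nat.eq_zero_or_pos A.natDegree with h | h
    · exact absurd (hunit A hA0 h) hA
    · exact h
  have hB1 : 1 ≤ B.natDegree := by
    rcases Nat.eq_zero_or_pos B.natDegree with h | h
    · exact absurd (hunit B hB0 h) hB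
    · exact h
  have hroot1 : ∀ P Q : ℚ[X], g = P * Q → P ≠ 0 → P.natDegree = 1 → False := by
    intro P Q hPQ hP0 hP1
    have hdeg : P.degree = 1 := by
      rw [Polynomial.degree_eq_natDegree hP0, hP1]; rfl
    obtain ⟨r, hr⟩ := Polynomial.exists_root_of_degree_eq_one hdeg
    exact noroot r (by rw [Polynomial.IsRoot, hPQ, Polynomial.eval_mul, hr.eq_zero, zero_mul])
  have hcases : A.natDegree = 1 ∨ A.natDegree = 2 ∨ A.natDegree = 3 := by omega
  rcases hcases with hAd | hAd | hAd
  · exact hroot1 A B hAB hA0 hAd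
  · -- 2 + 2 case
    have hBd : B.natDegree = 2 := by omega
    set a0 := A.coeff 0 with ha0d; set a1 := A.coeff 1 with ha1d; set a2 := A.coeff 2 with ha2d
    set c0 := B.coeff 0 with hc0d; set c1 := B.coeff 1 with hc1d; set c2 := B.coeff 2 with hc2d
    have ha2 : a2 ≠ 0 := by
      have h' : A.leadingCoeff ≠ 0 := Polynomial.leadingCoeff_ne_zero.mpr hA0
      rwa [Polynomial.leadingCoeff, hAd] at h'
    have hc2 : c2 ≠ 0 := by
      have h' : B.leadingCoeff ≠ 0 := Polynomial.leadingCoeff_ne_zero.mpr hB0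
      rwa [Polynomial.leadingCoeff, hBd] at h'
    have hAe : A = C a0 + C a1 * X + C a2 * X^2 := by
      conv_lhs => rw [A.as_sum_range' 3 (by omega)]
      simp only [Finset.sum_range_succ, Finset.sum_range_zero, zero_add,
        ← C_mul_X_pow_eq_monomial, pow_zero, mul_one, pow_one]
      rfl
    have hBe : B = C c0 + C c1 * X + C c2 * X^2 := by
      conv_lhs => rw [B.as_sum_range' 3 (by omega)]
      simp only [Finset.sum_range_succ, Finset.sum_range_zero, zero_add,
        ← C_mul_X_pow_eq_monomial, pow_zero, mul_one, pow_one]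
      rfl
    rw [hAe, hBe, ] at hAB
    rw [hgexp] at hAB
    have hprod : (C a0 + C a1 * X + C a2 * X^2) * (C c0 + C c1 * X + C c2 * X^2)
        = C (a0*c0) + C (a0*c1 + a1*c0) * X + C (a0*c2+a1*c1+a2*c0) * X^2
          + C (a1*c2+a2*c1)*X^3 + C (a2*c2)*X^4 := by
      simp only [C_mul, C_add]; ring
    rw [hprod] at hAB
    have e4 := congrArg (fun P => Polynomial.coeff P 4) hAB
    have e3 := congrArg (fun P => Polynomial.coeff P 3) hAB
    have e2 := congrArg (fun P => Polynomial.coeff P 2) hAB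
    have e1 := congrArg (fun P => Polynomial.coeff P 1) hAB
    have e0 := congrArg (fun P => Polynomial.coeff P 0) hAB
    simp only [coeff_add, coeff_C_mul, coeff_X_pow, coeff_C, coeff_X, mul_ite,
      mul_one, mul_zero] at e4 e3 e2 e1 e0
    norm_num at e4 e3 e2 e1 e0
    -- expected: e4 : k^2 = a2*c2 ; e3 : 0 = a1*c2 + a2*c1 ;
    -- e2 : 2*k^2*b + b = a0*c2 + a1*c1 + a2*c0 ; e1 : 0 = a0*c1 + a1*c0 ; e0 : k^2*b^2 = a0*c0
    rcases eq_or_ne a1 0 with ha1 | ha1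
    · have hc1 : c1 = 0 := by
        have h' : a2 * c1 = 0 := by linear_combination -e3 - c2 * ha1
        rcases mul_eq_zero.mp h' with h | h
        · exact absurd h ha2
        · exact h
      apply h2
      refine ⟨(a0*c2 - a2*c0)/b, ?_⟩
      field_simp
      have E2 : a0*c2 + a2*c0 = 2*k^2*b + b := by
        linear_combination -e2 - c1 * ha1
      linear_combination -(a0*c2 + a2*c0 + 2*k^2*b + b) * E2 - 4*a2*c2*e0 - 4*k^2*b^2*e4
    · have key : a0*c2 = a2*c0 := by
        have h5 : a1 * (a0*c2 - a2*c0) = 0 := by linear_combination -a0 * e3 + a2 * e1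
        rcases mul_eq_zero.mp h5 with h | h
        · exact absurd h ha1
        · linarith
      have hsq : (a0*c2 - k^2*b) * (a0*c2 + k^2*b) = 0 := by
        linear_combination (a0*c2) * key - a2*c2*e0 - k^2*b^2*e4
      rcases mul_eq_zero.mp hsq with hcase | hcase
      · have hcase' : a0*c2 = k^2*b := by linarith
        have ha1c1 : a1*c1 = b := by linear_combination -e2 + key - 2*hcase'
        have ha1sq : a1^2*c2 = -(a2*b) := by linear_combination (-a1) * e3 + (-a2) * ha1c1
        apply h1
        refine ⟨a1*k/a2, ?_⟩
        field_simp
        linear_combination (-a2)*ha1sq - a1^2*e4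
      · have hcase' : a0*c2 = -(k^2*b) := by linarith
        have ha1c1 : a1*c1 = 4*k^2*b + b := by linear_combination -e2 + key - 2*hcase'
        have ha1sq : a1^2*c2 = -(a2*(4*k^2*b+b)) := by
          linear_combination (-a1) * e3 + (-a2) * ha1c1
        apply h3
        refine ⟨a1*k/a2, ?_⟩
        field_simp
        linear_combination (-a2)*ha1sq - a1^2*e4
  · exact hroot1 B A (by rw [hAB, mul_comm]) hB0 (by omega)
end

section
/- Work in the polynomial ring ℤ[k]. Define P_1 = 2k, Q_1 = 1, P_{n+1} = k(P_n² + Q_n²), Q_{n+1} = P_n·Q_n. Let s(n) = (2^n − (−1)^n)/3. Then for every n ≥ 1, k^{s(n)} divides P_n in ℤ[k], and P_n / k^{s(n)} is not divisible by k (i.e., s(n) is the exact power of k dividing P_n). -/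
open Polynomial in
theorem stmt17 (P Q : ℕ → ℤ[X])
    (hP1 : P 1 = 2 * X) (hQ1 : Q 1 = 1)
    (hP : ∀ n : ℕ, 1 ≤ n → P (n + 1) = X * ((P n) ^ 2 + (Q n) ^ 2))
    (hQ : ∀ n : ℕ, 1 ≤ n → Q (n + 1) = P n * Q n)
    (s : ℕ → ℕ) (hs : ∀ n : ℕ, 3 * (s n : ℤ) = 2 ^ n - (-1) ^ n) :
    ∀ n : ℕ, 1 ≤ n → ∃ R : ℤ[X], P n = X ^ (s n) * R ∧ ¬ (X : ℤ[X]) ∣ R := by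
  have hc : ∀ n : ℕ, ((-1:ℤ))^n = 1 ∨ ((-1:ℤ))^n = -1 :=
    fun n => (Nat.even_or_odd n).imp Even.neg_one_pow Odd.neg_one_pow
  have hodd : ∀ m : ℕ, 1 ≤ m → s m % 2 = 1 := by
    intro m hm
    have h1 := hs m
    have h2 : (2:ℤ)^m = 2 * 2^(m-1) := by
      rw [← pow_succ']; congr 1; omega
    rw [h2] at h1
    rcases hc m with h | h <;> rw [h] at h1 <;>
      generalize (2:ℤ)^(m-1) = e at h1 <;> omega
  set t : ℕ → ℕ := fun n => (s (n+1) - 1) / 2 with ht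
  have hst : ∀ n : ℕ, 1 ≤ n → s (n+1) = 2 * t n + 1 := by
    intro n hn
    have := hodd (n+1) (by omega)
    simp only [ht]
    omega
  have hrel : ∀ n : ℕ, 1 ≤ n → (3 : ℤ) * s n = 2^n - (-1)^n ∧
      (3:ℤ) * s (n+1) = 2 * 2^n + (-1)^n ∧ (3:ℤ) * s (n+2) = 4 * 2^n - (-1)^n := by
    intro n hn
    refine ⟨hs n, ?_, ?_⟩
    · have h := hs (n+1)
      rw [show ((2:ℤ))^(n+1) = 2*2^n by rw [pow_succ]; ring,
        show ((-1:ℤ))^(n+1) = -((-1:ℤ))^n by rw [pow_succ]; ring] at h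
      linarith
    · have h := hs (n+2)
      rw [show ((2:ℤ))^(n+2) = 4*2^n by rw [pow_succ, pow_succ]; ring,
        show ((-1:ℤ))^(n+2) = ((-1:ℤ))^n by rw [pow_succ, pow_succ]; ring] at h
      linarith
  have hts : ∀ n : ℕ, 1 ≤ n → t n ≤ s n := by
    intro n hn
    have e2 := hst n hn
    obtain ⟨h1, h2, _⟩ := hrel n hn
    have hb : s (n+1) ≤ 2 * s n + 1 := by
      rcases hc n with h | h <;> rw [h] at h1 h2 <;>
        generalize (2:ℤ)^n = e at h1 h2 <;> omega
    omega
  have htt : ∀ n : ℕ, 1 ≤ n → t (n+1) = s n + t n := by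
    intro n hn
    have e2 := hst n hn
    have e3 := hst (n+1) (by omega)
    rw [show n+1+1 = n+2 by omega] at e3
    obtain ⟨h1, h2, h3⟩ := hrel n hn
    have e4 : s (n+2) = 2 * s n + s (n+1) := by
      generalize (2:ℤ)^n = e at h1 h2 h3
      generalize ((-1):ℤ)^n = c at h1 h2 h3
      omega
    omega
  have key : ∀ n : ℕ, 1 ≤ n → ∃ R S : ℤ[X], P n = X ^ s n * R ∧ Q n = X ^ t n * S ∧
      R.coeff 0 ≠ 0 ∧ S.coeff 0 ≠ 0 := by
    intro n hn
    induction n with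
    | zero => omega
    | succ m ih =>
      rcases Nat.lt_or_ge m 1 with hm | hm
      · -- m = 0, n = 1
        have hm0 : m = 0 := by omega
        subst hm0
        have hs1 : s 1 = 1 := by
          have h := hs 1
          norm_num at h
          omega
        have hs2 : s 2 = 1 := by
          have h := hs 2
          norm_num at h
          omega
        have ht1 : t 1 = 0 := by
          have h := hst 1 le_rfl
          rw [show 1+1 = 2 by omega] at h
          omega
        refine ⟨2, 1, ?_, ?_, ?_, ?_⟩
        · rw [hP1, hs1]; ring
        · rw [hQ1, ht1]; ring
        · simp
        · simp
      · obtain ⟨R, S, hPm, hQm, hR0, hS0⟩ := ih hm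
        obtain ⟨d, hdd⟩ : ∃ d, s m = d + t m := ⟨s m - t m, by have := hts m hm; omega⟩
        refine ⟨X^(2*d) * R^2 + S^2, R * S, ?_, ?_, ?_, ?_⟩
        · rw [hP m hm, hPm, hQm, hst m hm, hdd]; ring
        · rw [hQ m hm, hPm, hQm, htt m hm]; ring
        · have h1 : (X^(2*d) * R^2 + S^2 : ℤ[X]).coeff 0 =
              (if (0:ℕ) = 2*d then 1 else 0) * (R.coeff 0 * R.coeff 0) +
                S.coeff 0 * S.coeff 0 := by
            rw [Polynomial.coeff_add, sq, sq, Polynomial.mul_coeff_zero,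
              Polynomial.mul_coeff_zero, Polynomial.mul_coeff_zero,
              Polynomial.coeff_X_pow]
          rw [h1]
          split_ifs with h
          · have hR : 0 < R.coeff 0 * R.coeff 0 := mul_self_pos.mpr hR0
            have hS : 0 ≤ S.coeff 0 * S.coeff 0 := mul_self_nonneg _
            intro hcon; nlinarith
          · simpa using mul_self_ne_zero.mpr hS0
        · rw [Polynomial.mul_coeff_zero]
          exact mul_ne_zero hR0 hS0
  intro n hn
  obtain ⟨R, S, h1, _, hR0, _⟩ := key n hn
  exact ⟨R, h1, by rw [Polynomial.X_dvd_iff]; exact hR0⟩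
end
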